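/- Let p ∈ (1,2] and C_p = ((p-1)/p)^{p/2}·((2-p)/(p-1))^{(2-p)/2}. Let X be a random variable with E[X] = μ and E|X-μ|^p ≤ v_p, and let φ: ℝ → ℝ be a nondecreasing function with -log(1 - x + C_p|x|^p) ≤ φ(x) ≤ log(1 + x + C_p|x|^p) for all x. Then for any λ > 0, E[exp(φ(λ(X - μ)))] ≤ exp(C_p·v_p·λ^p). -/
import Mathlib

open MeasureTheory

noncomputable def catoniC (p : ℝ) : ℝ :=
  ((p - 1) / p) ^ (p / 2) * ((2 - p) / (p - 1)) ^ ((2 - p) / 2)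

lemma catoniC_pos {p : ℝ} (hp1 : 1 < p) (hp2 : p ≤ 2) : 0 < catoniC p := by
  unfold catoniC
  rcases eq_or_lt_of_le hp2 with h | h
  · subst h
    rw [show ((2:ℝ)-2)/(2-1) = 0 by norm_num, show ((2:ℝ)-2)/2 = 0 by norm_num,
      Real.rpow_zero, mul_one]
    exact Real.rpow_pos_of_pos (by norm_num) _
  · have h1 : (0:ℝ) < (p - 1) / p := div_pos (by linarith) (by linarith)
    have h2 : (0:ℝ) < (2 - p) / (p - 1) := by
      apply div_pos <;> linarith
    exact mul_pos (Real.rpow_pos_of_pos h1 _) (Real.rpow_pos_of_pos h2 _)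

/-- Positivity of `1 + x + c |x|^p` derived from the hypotheses. -/
lemma catoni_pos {p c : ℝ} (hp1 : 1 < p) (hc : 0 < c)
    (φ : ℝ → ℝ) (hφ : Monotone φ)
    (hub : ∀ x : ℝ, φ x ≤ Real.log (1 + x + c * |x| ^ p)) :
    ∀ x : ℝ, 0 < 1 + x + c * |x| ^ p := by
  set A : ℝ → ℝ := fun x => 1 + x + c * |x| ^ p with hA
  have hAcont : Continuous A := by
    apply (continuous_const.add continuous_id).add
    exact continuous_const.mul (continuous_abs.rpow_const (fun x => Or.inr (by positivity)))
  by_contra hcon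
  push_neg at hcon
  obtain ⟨x₀, hx₀⟩ := hcon
  set S : Set ℝ := {x | A x ≤ 0} with hS
  have hSc : IsClosed S := isClosed_le hAcont continuous_const
  have hSne : S.Nonempty := ⟨x₀, hx₀⟩
  -- S is bounded below
  have hbdd : BddBelow S := by
    refine ⟨-(max 1 ((1/c) ^ (1/(p-1)))), fun x hx => ?_⟩
    by_contra hlt
    push_neg at hlt
    have ht1 : (1:ℝ) < -x := by
      have := le_max_left (1:ℝ) ((1/c) ^ (1/(p-1)))
      linarith
    have ht0 : (0:ℝ) < -x := by linarith
    have ht2 : (1/c) ^ (1/(p-1)) < -x := by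
      have := le_max_right (1:ℝ) ((1/c) ^ (1/(p-1)))
      linarith
    have hp1' : (0:ℝ) < p - 1 := by linarith
    -- (-x) ^ (p-1) > 1/c
    have hkey : 1/c < (-x) ^ (p - 1) := by
      have h1c : (0:ℝ) ≤ (1/c) ^ (1/(p-1)) := Real.rpow_nonneg (by positivity) _
      have := Real.rpow_lt_rpow h1c ht2 hp1'
      rwa [← Real.rpow_mul (by positivity : (0:ℝ) ≤ 1/c), one_div (p-1),
        inv_mul_cancel₀ (ne_of_gt hp1'), Real.rpow_one] at this
    have habs : |x| = -x := abs_of_neg (by linarith)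
    have hxp : |x| ^ p = (-x) ^ (p-1) * (-x) := by
      rw [habs]
      have h := Real.rpow_add ht0 (p-1) 1
      rw [Real.rpow_one, show p - 1 + 1 = p by ring] at h
      exact h
    have : A x ≤ 0 := hx
    rw [hA] at this
    simp only at this
    have hbig : c * |x| ^ p > -x := by
      rw [hxp]
      calc -x = c * (1/c) * (-x) := by field_simp
      _ < c * ((-x) ^ (p-1)) * (-x) := by
          apply mul_lt_mul_of_pos_right _ ht0
          exact mul_lt_mul_of_pos_left hkey hc
      _ = c * ((-x) ^ (p-1) * (-x)) := by ring
    linarith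
  set a := sInf S with ha
  have haS : a ∈ S := hSc.csInf_mem hSne hbdd
  have hnot : ∀ x, x < a → 0 < A x := by
    intro x hx
    by_contra h
    push_neg at h
    exact absurd (csInf_le hbdd (show x ∈ S from h)) (not_le.2 hx)
  -- On [a-1, a), A x ≥ exp (φ (a-1))
  have hIco : ∀ x ∈ Set.Ico (a-1) a, Real.exp (φ (a-1)) ≤ A x := by
    rintro x ⟨h1, h2⟩
    have hAx : 0 < A x := hnot x h2
    calc Real.exp (φ (a-1)) ≤ Real.exp (φ x) := Real.exp_le_exp.2 (hφ h1)
    _ ≤ Real.exp (Real.log (A x)) := Real.exp_le_exp.2 (hub x)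
    _ = A x := Real.exp_log hAx
  have hT : IsClosed {x | Real.exp (φ (a-1)) ≤ A x} := isClosed_le continuous_const hAcont
  have hsub : closure (Set.Ico (a-1) a) ⊆ {x | Real.exp (φ (a-1)) ≤ A x} :=
    hT.closure_subset_iff.2 hIco
  have haIcc : a ∈ closure (Set.Ico (a-1) a) := by
    rw [closure_Ico (by linarith : a - 1 ≠ a)]
    exact ⟨by linarith, le_refl a⟩
  have : Real.exp (φ (a-1)) ≤ A a := hsub haIcc
  have h0 : (0:ℝ) < A a := lt_of_lt_of_le (Real.exp_pos _) this
  have haS' : A a ≤ 0 := haS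
  linarith

theorem catoni_mgf_bound {Ω : Type*} [MeasurableSpace Ω] (P : Measure Ω)
    [IsProbabilityMeasure P]
    (p v_p μ l : ℝ) (hp : p ∈ Set.Ioc (1 : ℝ) 2) (hl : 0 < l)
    (φ : ℝ → ℝ) (hφ : Monotone φ)
    (hφ_bound : ∀ x : ℝ,
      -Real.log (1 - x + catoniC p * |x| ^ p) ≤ φ x ∧
        φ x ≤ Real.log (1 + x + catoniC p * |x| ^ p))
    (X : Ω → ℝ) (hXmeas : Measurable X)
    (hmean : Integrable X P) (hmean' : ∫ ω, X ω ∂P = μ)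
    (hmom_int : Integrable (fun ω => |X ω - μ| ^ p) P)
    (hmom : ∫ ω, |X ω - μ| ^ p ∂P ≤ v_p) :
    (∫ ω, Real.exp (φ (l * (X ω - μ))) ∂P) ≤ Real.exp (catoniC p * v_p * l ^ p) := by
  obtain ⟨hp1, hp2⟩ := hp
  set c := catoniC p with hc_def
  have hc : 0 < c := catoniC_pos hp1 hp2
  have hpos : ∀ x : ℝ, 0 < 1 + x + c * |x| ^ p :=
    catoni_pos hp1 hc φ hφ (fun x => (hφ_bound x).2)
  -- pointwise bound
  have hpt : ∀ x : ℝ, Real.exp (φ x) ≤ 1 + x + c * |x| ^ p := by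
    intro x
    calc Real.exp (φ x) ≤ Real.exp (Real.log (1 + x + c * |x| ^ p)) :=
      Real.exp_le_exp.2 (hφ_bound x).2
    _ = _ := Real.exp_log (hpos x)
  have hscale : ∀ y : ℝ, |l * y| ^ p = l ^ p * |y| ^ p := by
    intro y
    rw [abs_mul, abs_of_pos hl, Real.mul_rpow hl.le (abs_nonneg y)]
  set g : Ω → ℝ := fun ω => 1 + l * (X ω - μ) + c * l ^ p * |X ω - μ| ^ p with hg_def
  have hfg : ∀ ω, Real.exp (φ (l * (X ω - μ))) ≤ g ω := by
    intro ω
    have := hpt (l * (X ω - μ))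
    rwa [hscale, ← mul_assoc] at this
  have hg_int : Integrable g P := by
    apply Integrable.add
    · apply Integrable.add (integrable_const 1)
      exact (hmean.sub (integrable_const μ)).const_mul l
    · exact hmom_int.const_mul _
  have hf_meas : AEStronglyMeasurable (fun ω => Real.exp (φ (l * (X ω - μ)))) P := by
    apply Measurable.aestronglyMeasurable
    exact Real.measurable_exp.comp (hφ.measurable.comp
      ((hXmeas.sub measurable_const).const_mul l))
  have hf_int : Integrable (fun ω => Real.exp (φ (l * (X ω - μ)))) P := by
    apply Integrable.mono' hg_int hf_meas
    filter_upwards with ω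
    rw [Real.norm_eq_abs, abs_of_pos (Real.exp_pos _)]
    exact hfg ω
  have hle : (∫ ω, Real.exp (φ (l * (X ω - μ))) ∂P) ≤ ∫ ω, g ω ∂P :=
    integral_mono hf_int hg_int hfg
  have hi0 : Integrable (fun ω => l * (X ω - μ)) P := by
    exact (hmean.sub (integrable_const μ)).const_mul l
  have hi1 : Integrable (fun ω => 1 + l * (X ω - μ)) P := (integrable_const 1).add hi0
  have hi2 : Integrable (fun ω => c * l ^ p * |X ω - μ| ^ p) P := hmom_int.const_mul _
  have hgval : (∫ ω, g ω ∂P) = 1 + c * l ^ p * ∫ ω, |X ω - μ| ^ p ∂P := by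
    simp only [hg_def]
    rw [integral_add hi1 hi2, integral_add (integrable_const 1) hi0]
    rw [integral_const_mul, integral_const_mul,
      integral_sub hmean (integrable_const μ), integral_const, hmean']
    simp
  have hmom0 : (0:ℝ) ≤ ∫ ω, |X ω - μ| ^ p ∂P :=
    integral_nonneg fun ω => by positivity
  have hfinal : (∫ ω, g ω ∂P) ≤ Real.exp (c * v_p * l ^ p) := by
    rw [hgval]
    have h1 : c * l ^ p * (∫ ω, |X ω - μ| ^ p ∂P) ≤ c * v_p * l ^ p := by
      have : c * l ^ p * (∫ ω, |X ω - μ| ^ p ∂P) ≤ c * l ^ p * v_p := by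
        apply mul_le_mul_of_nonneg_left hmom
        positivity
      linarith [this]
    calc 1 + c * l ^ p * ∫ ω, |X ω - μ| ^ p ∂P ≤ 1 + c * v_p * l ^ p := by linarith
    _ ≤ Real.exp (c * v_p * l ^ p) := by
        have := Real.add_one_le_exp (c * v_p * l ^ p)
        linarith
  exact hle.trans hfinal
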